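/- For the automorphism χ_ℓ(a,b) = (a, a^ℓ b) of the torus T² with ℓ ≠ 0, every continuous group homomorphism ρ : T² → GL(n, ℂ) satisfying ρ ∘ χ_ℓ = ρ is trivial on the subgroup {1} × T¹; that is, ρ(1,b) = 1 for all b ∈ T¹. -/

import Mathlib

/-- For the automorphism `χ_ℓ (a, b) = (a, a^ℓ * b)` of the torus
`T² = Circle × Circle` with `ℓ ≠ 0`, every continuous group homomorphism
`ρ : T² → GL(n, ℂ)` satisfying `ρ ∘ χ_ℓ = ρ` is trivial on the subgroup
`{1} × T¹`: `ρ (1, b) = 1` for all `b`. -/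
theorem statement14 (ℓ : ℤ) (hℓ : ℓ ≠ 0) (n : ℕ)
    (ρ : (Circle × Circle) →* GL (Fin n) ℂ)
    (hcont : Continuous fun x : Circle × Circle => ((ρ x : GL (Fin n) ℂ) : Matrix (Fin n) (Fin n) ℂ))
    (hinv : ∀ a b : Circle, ρ (a, a ^ ℓ * b) = ρ (a, b)) :
    ∀ b : Circle, ρ (1, b) = 1 := by
  -- first: ρ (1, a^ℓ) = 1 for all a
  have key : ∀ a : Circle, ρ (1, a ^ ℓ) = 1 := by
    intro a
    have h := hinv a 1
    have h2 : ρ (a, 1) * ρ (1, a ^ ℓ) = ρ (a, 1) := by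
      rw [← map_mul]
      simpa [Prod.mk_mul_mk] using h
    exact mul_left_cancel (h2.trans (mul_one _).symm)
  intro b
  -- b = (exp (arg b / ℓ))^ℓ
  obtain ⟨t, ht⟩ : ∃ t : ℝ, Circle.exp t = b := ⟨Complex.arg b, Circle.exp_arg b⟩
  have hpow : (Circle.exp (t / ℓ)) ^ ℓ = b := by
    have : (ℓ : ℝ) ≠ 0 := Int.cast_ne_zero.mpr hℓ
    rw [← ht]
    have hz := map_zsmul Circle.expHom ℓ (t / ℓ)
    have : ℓ • (t / ℓ) = t := by
      rw [zsmul_eq_mul]; field_simp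
    rw [this] at hz
    rw [← Circle.exp_zsmul, this]
  rw [← hpow]
  exact key _
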